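/- Let G be a variable-regular Tanner graph with column weight γ ≥ 3 and girth at least 8. Then every (a,0) trapping set whose induced subgraph contains a check node of degree at least 4 satisfies a ≥ 4γ. -/

import Mathlib

open SimpleGraph Finset

lemma cycle_len_ge {V : Type*} {G : SimpleGraph V} (hg : (8 : ℕ∞) ≤ G.girth)
    {a : V} (w : G.Walk a a) (hw : w.IsCycle) : 8 ≤ w.length := by
  have h8 : (8 : ℕ∞) ≤ G.egirth := by
    by_cases h : G.egirth = ⊤
    · simp [h]
    · rw [← ENat.coe_toNat h]; exact_mod_cast hg
  exact_mod_cast le_egirth.mp h8 a w hw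

lemma no4cycle {V : Type*} {G : SimpleGraph V} (hg : (8 : ℕ∞) ≤ G.girth)
    {a b c d : V} (hab : G.Adj a b) (hbc : G.Adj b c) (hcd : G.Adj c d)
    (hda : G.Adj d a) (hac : a ≠ c) (hbd : b ≠ d) : False := by
  have h1 := hab.ne; have h2 := hbc.ne; have h3 := hcd.ne; have h4 := hda.ne
  let p : G.Walk a a := Walk.cons hab (Walk.cons hbc (Walk.cons hcd (Walk.cons hda Walk.nil)))
  have hp : p.IsCycle := by
    rw [Walk.isCycle_def]
    refine ⟨?_, by simp [p], ?_⟩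
    · rw [Walk.isTrail_def]
      simp only [p, Walk.edges_cons, Walk.edges_nil, List.nodup_cons, List.nodup_nil,
        List.mem_cons, List.not_mem_nil, Sym2.eq_iff]
      aesop
    · simp only [p, Walk.support_cons, Walk.support_nil, List.tail_cons, List.nodup_cons,
        List.nodup_nil, List.mem_cons, List.not_mem_nil]
      aesop
  have := cycle_len_ge hg p hp
  simp [p] at this

lemma no6cycle {V : Type*} {G : SimpleGraph V} (hg : (8 : ℕ∞) ≤ G.girth)
    {a b c d e f : V} (hab : G.Adj a b) (hbc : G.Adj b c) (hcd : G.Adj c d)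
    (hde : G.Adj d e) (hef : G.Adj e f) (hfa : G.Adj f a)
    (hac : a ≠ c) (hbd : b ≠ d) (hce : c ≠ e) (hdf : d ≠ f) (hae : a ≠ e) (hbf : b ≠ f)
    (had : a ≠ d) (hbe : b ≠ e) (hcf : c ≠ f) :
    False := by
  have h1 := hab.ne; have h2 := hbc.ne; have h3 := hcd.ne
  have h4 := hde.ne; have h5 := hef.ne; have h6 := hfa.ne
  let p : G.Walk a a := Walk.cons hab (Walk.cons hbc (Walk.cons hcd (Walk.cons hde
    (Walk.cons hef (Walk.cons hfa Walk.nil)))))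
  have hp : p.IsCycle := by
    rw [Walk.isCycle_def]
    refine ⟨?_, by simp [p], ?_⟩
    · rw [Walk.isTrail_def]
      simp only [p, Walk.edges_cons, Walk.edges_nil, List.nodup_cons, List.nodup_nil,
        List.mem_cons, List.not_mem_nil, Sym2.eq_iff]
      aesop
    · simp only [p, Walk.support_cons, Walk.support_nil, List.tail_cons, List.nodup_cons,
        List.nodup_nil, List.mem_cons, List.not_mem_nil]
      aesop
  have := cycle_len_ge hg p hp
  simp [p] at this

/-- Let `G` be a variable-regular Tanner graph with column weight `γ ≥ 3` and girth
at least 8.  Then every `(a,0)` trapping set whose induced subgraph contains a check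
node of degree at least 4 satisfies `a ≥ 4γ`. -/
theorem stmt_13 {V : Type*} [Fintype V] [DecidableEq V]
    (G : SimpleGraph V) [DecidableRel G.Adj]
    (isVar : V → Prop) [DecidablePred isVar]
    (hbip : ∀ x y, G.Adj x y → (isVar x ↔ ¬ isVar y))
    (hg : (8 : ℕ∞) ≤ G.girth)
    (γ : ℕ) (hγ : 3 ≤ γ)
    (hdegV : ∀ v, isVar v → G.degree v = γ)
    (S : Finset V) (hSvar : ∀ v ∈ S, isVar v)
    (heven : ∀ w, ¬ isVar w → Even ((S.filter (fun v => G.Adj w v)).card))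
    (hdeg4 : ∃ w, ¬ isVar w ∧ 4 ≤ (S.filter (fun v => G.Adj w v)).card) :
    4 * γ ≤ S.card := by
  classical
  obtain ⟨w, hwv, hw4⟩ := hdeg4
  obtain ⟨F, hFsub, hFcard⟩ := Finset.exists_subset_card_eq hw4
  have hF : ∀ v ∈ F, v ∈ S ∧ G.Adj w v := by
    intro v hv
    have := hFsub hv
    rw [Finset.mem_filter] at this
    exact this
  have hFvar : ∀ v ∈ F, isVar v := fun v hv => hSvar v (hF v hv).1
  -- no two distinct members of F share a check node other than w
  have key : ∀ v ∈ F, ∀ v' ∈ F, ∀ c, c ≠ w → G.Adj v c → G.Adj v' c → v = v' := by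
    intro v hv v' hv' c hcw hvc hv'c
    by_contra hne
    exact no4cycle hg (hF v hv).2 hvc hv'c.symm (hF v' hv').2.symm hcw.symm hne
  set C := F.biUnion (fun v => (G.neighborFinset v).erase w) with hCdef
  have hCmem : ∀ c ∈ C, c ≠ w ∧ ∃ v ∈ F, G.Adj v c := by
    intro c hc
    rw [hCdef, Finset.mem_biUnion] at hc
    obtain ⟨v, hvF, hc⟩ := hc
    rw [Finset.mem_erase, SimpleGraph.mem_neighborFinset] at hc
    exact ⟨hc.1, v, hvF, hc.2⟩
  have hCcard : C.card = 4 * (γ - 1) := by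
    rw [hCdef, Finset.card_biUnion]
    · rw [Finset.sum_congr rfl (fun v hv => ?_), Finset.sum_const, hFcard, smul_eq_mul]
      rw [Finset.card_erase_of_mem, SimpleGraph.card_neighborFinset_eq_degree,
        hdegV v (hFvar v hv)]
      rw [SimpleGraph.mem_neighborFinset]
      exact (hF v hv).2.symm
    · intro v hv v' hv' hne
      rw [Function.onFun, Finset.disjoint_left]
      intro c hc hc'
      rw [Finset.mem_erase, SimpleGraph.mem_neighborFinset] at hc hc'
      exact hne (key v hv v' hv' c hc.1 hc.2 hc'.2)
  have hCcheck : ∀ c ∈ C, ¬ isVar c := by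
    intro c hc
    obtain ⟨_, v, hvF, hvc⟩ := hCmem c hc
    exact (hbip v c hvc).mp (hFvar v hvF)
  -- choice set is nonempty
  have hne : ∀ c ∈ C, ((S.filter (fun y => G.Adj c y)) \ F).Nonempty := by
    intro c hc
    obtain ⟨hcw, v, hvF, hvc⟩ := hCmem c hc
    have heven' := heven c (hCcheck c hc)
    have hv_mem : v ∈ S.filter (fun y => G.Adj c y) :=
      Finset.mem_filter.mpr ⟨(hF v hvF).1, hvc.symm⟩
    have h1 : 1 ≤ (S.filter (fun y => G.Adj c y)).card := Finset.card_pos.mpr ⟨v, hv_mem⟩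
    obtain ⟨k, hk⟩ := heven'
    have h2 : 2 ≤ (S.filter (fun y => G.Adj c y)).card := by omega
    have hcap : ((S.filter (fun y => G.Adj c y)) ∩ F).card ≤ 1 := by
      rw [Finset.card_le_one]
      intro a ha b hb
      rw [Finset.mem_inter, Finset.mem_filter] at ha hb
      exact key a ha.2 b hb.2 c hcw ha.1.2.symm hb.1.2.symm
    rw [← Finset.card_pos, ← Finset.sdiff_inter_self_left,
      Finset.card_sdiff_of_subset (Finset.inter_subset_left)]
    omega
  let g : V → V := fun c =>
    if h : ((S.filter (fun y => G.Adj c y)) \ F).Nonempty then h.choose else c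
  have hg1 : ∀ c ∈ C, g c ∈ (S.filter (fun y => G.Adj c y)) \ F := by
    intro c hc
    simp only [g, dif_pos (hne c hc)]
    exact (hne c hc).choose_spec
  have hg2 : ∀ c ∈ C, g c ∈ S ∧ G.Adj c (g c) ∧ g c ∉ F := by
    intro c hc
    have := hg1 c hc
    rw [Finset.mem_sdiff, Finset.mem_filter] at this
    exact ⟨this.1.1, this.1.2, this.2⟩
  -- injectivity on C
  have hinj : Set.InjOn g C := by
    intro c hc c' hc' hgg
    by_contra hne'
    rw [Finset.mem_coe] at hc hc'
    obtain ⟨hcw, v, hvF, hvc⟩ := hCmem c hc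
    obtain ⟨hc'w, v', hv'F, hv'c⟩ := hCmem c' hc'
    obtain ⟨hxS, hcx, hxF⟩ := hg2 c hc
    obtain ⟨_, hc'x', _⟩ := hg2 c' hc'
    rw [← hgg] at hc'x'
    have hxvar : isVar (g c) := hSvar _ hxS
    have hvx : v ≠ g c := fun h => hxF (h ▸ hvF)
    by_cases hvv' : v = v'
    · subst hvv'
      exact no4cycle hg hvc hcx hc'x'.symm hv'c.symm hvx hne'
    · refine no6cycle hg (hF v hvF).2 hvc hcx hc'x'.symm hv'c.symm (hF v' hv'F).2.symm
        hcw.symm hvx hne' (fun h => hxF (h ▸ hv'F)) hc'w.symm hvv'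
        (fun h => hwv (h ▸ hxvar)) (fun h => (hbip v' c' hv'c).mp (hFvar v' hv'F) (h ▸ hFvar v hvF))
        (fun h => (hbip v c hvc).mp (hFvar v hvF) (h ▸ hFvar v' hv'F))
  -- count
  have hsub : F ∪ C.image g ⊆ S := by
    intro x hx
    rw [Finset.mem_union] at hx
    rcases hx with hx | hx
    · exact (hF x hx).1
    · rw [Finset.mem_image] at hx
      obtain ⟨c, hc, rfl⟩ := hx
      exact (hg2 c hc).1
  have hdisj : Disjoint F (C.image g) := by
    rw [Finset.disjoint_right]
    intro x hx
    rw [Finset.mem_image] at hx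
    obtain ⟨c, hc, rfl⟩ := hx
    exact (hg2 c hc).2.2
  have hcard : (F ∪ C.image g).card = 4 + 4 * (γ - 1) := by
    rw [Finset.card_union_of_disjoint hdisj, hFcard, Finset.card_image_of_injOn hinj, hCcard]
  have := Finset.card_le_card hsub
  rw [hcard] at this
  omega
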